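/- There exist a finite colour set B₀, a tileset Θ₀ ⊆ B₀ × {x,y,z} × B₀, a colour a₀ ∈ B₀ and a subset C ⊆ B₀ such that: there is exactly one valid Θ₀-tiling τ of the Barbieri–Sablik H-graph with τ(0,0) = a₀, and this tiling satisfies τ(m,n) ∈ C if and only if (m,n) = (2^{s+1} − 1, 2^s k) for some s ≥ 0 and k ∈ ℤ (that is, the colours in C mark exactly the vertex set of the hyperbolic horoball). -/

import Mathlib

/-!  Common definitions for the Barbieri–Sablik H-graph.  Its vertex set is `ℕ × ℤ`. -/

/-- The three edge labels of the H-graph. -/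
inductive HLab : Type
  | x : HLab
  | y : HLab
  | z : HLab
deriving DecidableEq

instance : Primcodable HLab :=
  Primcodable.ofEquiv (Fin 3)
    { toFun := fun l => match l with | .x => 0 | .y => 1 | .z => 2
      invFun := fun i => match i with | 0 => .x | 1 => .y | 2 => .z
      left_inv := by intro l; cases l <;> rfl
      right_inv := by intro i; fin_cases i <;> rfl }

/-- The `x`-neighbour of a vertex: `(2m,n)` and `(2m+1,n)` are exchanged. -/
def xNbr : ℕ × ℤ → ℕ × ℤ := fun p => (if p.1 % 2 = 0 then p.1 + 1 else p.1 - 1, p.2)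

/-- The `y`-neighbour of a vertex: for even `k ≥ 2` and `2^(v₂ k) ∣ n`, the vertices
`(k-1,n)` and `(k,n)` are exchanged; all other vertices (namely `(0,n)`, and `(k-1,n)`,
`(k,n)` with `2^(v₂ k) ∤ n`) carry a `y`-labelled loop, i.e. are fixed. -/
def yNbr : ℕ × ℤ → ℕ × ℤ := fun p =>
  if p.1 = 0 then p
  else if p.1 % 2 = 1 then
    (if ((2 : ℤ) ^ padicValNat 2 (p.1 + 1)) ∣ p.2 then (p.1 + 1, p.2) else p)
  else
    (if ((2 : ℤ) ^ padicValNat 2 p.1) ∣ p.2 then (p.1 - 1, p.2) else p)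

/-- A map `τ : ℕ × ℤ → B` is a valid `Θ`-tiling of the H-graph if the endpoint colours of
every labelled edge (in both directions, for the unoriented `x`- and `y`-edges) form a
triple in `Θ`; there is a `z`-labelled edge from `(m,n)` to `(m,n+1)` for every vertex. -/
def HValid {B : Type} (Θ : Set (B × HLab × B)) (τ : ℕ × ℤ → B) : Prop :=
  ∀ p : ℕ × ℤ,
    (τ p, HLab.z, τ (p.1, p.2 + 1)) ∈ Θ ∧
    (τ p, HLab.x, τ (xNbr p)) ∈ Θ ∧
    (τ p, HLab.y, τ (yNbr p)) ∈ Θ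

/-! ### The colour set -/

/-- Colours: eight boolean components recording, for a vertex `(m,n)`:
`a` = parity of `m`; `o` = `m = 0`; `r` = parity of `n`; `z0` = `n = 0`; `zn` = `n < 0`;
`e` = presence of a genuine `y`-edge at the vertex; `F` = membership in the "first block"
of the row; `h` = `m+1` is a power of two (with `m ≠ 0`). -/
@[ext] structure Col where
  a : Bool
  o : Bool
  r : Bool
  z0 : Bool
  zn : Bool
  e : Bool
  F : Bool
  h : Bool
deriving DecidableEq

instance : Fintype Col :=
  Fintype.ofEquiv (Bool × Bool × Bool × Bool × Bool × Bool × Bool × Bool)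
    { toFun := fun t => ⟨t.1, t.2.1, t.2.2.1, t.2.2.2.1, t.2.2.2.2.1, t.2.2.2.2.2.1,
        t.2.2.2.2.2.2.1, t.2.2.2.2.2.2.2⟩
      invFun := fun c => (c.a, c.o, c.r, c.z0, c.zn, c.e, c.F, c.h)
      left_inv := fun t => rfl
      right_inv := fun c => rfl }

/-- The exponent governing the `y`-edge at column `m`. -/
def wexp (m : ℕ) : ℕ := if m % 2 = 1 then padicValNat 2 (m + 1) else padicValNat 2 m

/-- Presence of a genuine `y`-edge at a vertex. -/
def edgeP (p : ℕ × ℤ) : Prop := p.1 ≠ 0 ∧ ((2 : ℤ) ^ wexp p.1 ∣ p.2)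

instance (p : ℕ × ℤ) : Decidable (edgeP p) := by unfold edgeP; infer_instance

/-- The intended (unique) tiling. -/
def gT (p : ℕ × ℤ) : Col :=
  { a := decide (p.1 % 2 = 1)
    o := decide (p.1 = 0)
    r := decide (p.2 % 2 = 1)
    z0 := decide (p.2 = 0)
    zn := decide (p.2 < 0)
    e := decide (edgeP p)
    F := decide ((2 : ℤ) ^ (Nat.log 2 p.1) ∣ p.2)
    h := decide (p.1 ≠ 0 ∧ p.1 + 1 = 2 ^ (padicValNat 2 (p.1 + 1))) }

/-- Colour invariants (unary constraints). -/
def CInv (c : Col) : Prop :=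
  (c.o = true → c.a = false ∧ c.e = false ∧ c.F = true ∧ c.h = false) ∧
  (c.z0 = true → c.zn = false ∧ c.r = false) ∧
  (c.z0 = true → c.o = false → c.e = true) ∧
  (c.e = true → c.r = false) ∧
  (c.a = false → c.o = false → c.F = true → c.e = true) ∧
  (c.h = true → c.a = true) ∧
  (c.a = true → c.F = true → c.e = false → c.h = true) ∧
  (c.a = true → c.e = true → c.F = false → c.h = false)

/-- Rule along a `z`-edge (from row `n` to row `n+1`). -/
def Rz (c d : Col) : Prop :=
  CInv c ∧ CInv d ∧ d.a = c.a ∧ d.o = c.o ∧ d.h = c.h ∧ d.r = !c.r ∧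
  (c.z0 = true → d.z0 = false ∧ d.zn = false) ∧
  (c.z0 = false → c.zn = false → d.z0 = false ∧ d.zn = false) ∧
  (d.z0 = true → c.zn = true ∧ c.r = true) ∧
  (d.zn = true → c.zn = true)

/-- Rule along an `x`-edge. -/
def Rx (c d : Col) : Prop :=
  CInv c ∧ CInv d ∧ d.a = !c.a ∧ d.r = c.r ∧ d.z0 = c.z0 ∧ d.zn = c.zn ∧ d.F = c.F

/-- Rule along a `y`-edge or loop. -/
def Ry (c d : Col) : Prop :=
  CInv c ∧ CInv d ∧
  ((c = d ∧ c.e = false) ∨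
   (c.e = true ∧ d.e = true ∧ d.a = !c.a ∧ d.r = c.r ∧ d.z0 = c.z0 ∧ d.zn = c.zn ∧
    d.F = c.F ∧ c.o = false ∧ d.o = false))

/-- The tileset. -/
def Θh : Set (Col × HLab × Col) := {t | match t with
  | (c, HLab.z, d) => Rz c d
  | (c, HLab.x, d) => Rx c d
  | (c, HLab.y, d) => Ry c d}

@[simp] lemma mem_Θh_z {c d : Col} : (c, HLab.z, d) ∈ Θh ↔ Rz c d := Iff.rfl
@[simp] lemma mem_Θh_x {c d : Col} : (c, HLab.x, d) ∈ Θh ↔ Rx c d := Iff.rfl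
@[simp] lemma mem_Θh_y {c d : Col} : (c, HLab.y, d) ∈ Θh ↔ Ry c d := Iff.rfl

/-! ### Arithmetic lemmas -/

lemma wexp_pos {m : ℕ} (hm : m ≠ 0) : 1 ≤ wexp m := by
  unfold wexp
  by_cases h : m % 2 = 1
  · rw [if_pos h]
    exact one_le_padicValNat_of_dvd (by omega) (by omega)
  · rw [if_neg h]
    exact one_le_padicValNat_of_dvd (by omega) (by omega)

lemma wexp_pair {m : ℕ} (hm : m % 2 = 0) (h0 : m ≠ 0) : wexp (m - 1) = wexp m := by
  unfold wexp
  rw [if_pos (by omega : (m-1) % 2 = 1), if_neg (by omega : ¬ m % 2 = 1)]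
  congr 1
  omega

lemma log_pair {m : ℕ} (hm : m % 2 = 0) : Nat.log 2 (m + 1) = Nat.log 2 m := by
  rcases Nat.eq_zero_or_pos m with h0 | h0
  · subst h0; simp
  · have hm2 : m ≠ 0 := by omega
    have h1 : 2 ^ Nat.log 2 m ≤ m := Nat.pow_log_le_self 2 hm2
    have h2 : m < 2 ^ (Nat.log 2 m + 1) := Nat.lt_pow_succ_log_self (by norm_num) m
    have h3 : m + 1 ≠ 2 ^ (Nat.log 2 m + 1) := by
      intro h
      have : 2 ∣ 2 ^ (Nat.log 2 m + 1) := dvd_pow_self 2 (by omega)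
      omega
    exact Nat.log_eq_of_pow_le_of_lt_pow (by omega) (by omega)

lemma log_two_pow_sub_one {w : ℕ} (hw : 1 ≤ w) : Nat.log 2 (2 ^ w - 1) = w - 1 := by
  have h1 : 2 ^ (w - 1) ≤ 2 ^ w - 1 := by
    have : 2 ^ w = 2 * 2 ^ (w - 1) := by
      rw [← pow_succ']
      congr 1
      omega
    have h2 : 1 ≤ 2 ^ (w-1) := Nat.one_le_two_pow
    omega
  have h2 : 2 ^ w - 1 < 2 ^ ((w - 1) + 1) := by
    have : (w - 1) + 1 = w := by omega
    rw [this]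
    have : 1 ≤ 2 ^ w := Nat.one_le_two_pow
    omega
  exact Nat.log_eq_of_pow_le_of_lt_pow h1 h2

lemma v2_le_log {m : ℕ} (hm : m ≠ 0) : padicValNat 2 m ≤ Nat.log 2 m := by
  rw [Nat.le_log_iff_pow_le (by norm_num) hm]
  exact Nat.le_of_dvd (by omega) pow_padicValNat_dvd

lemma intpow2_dvd_trans {a b : ℕ} {n : ℤ} (h : a ≤ b) (hd : (2:ℤ) ^ b ∣ n) : (2:ℤ) ^ a ∣ n :=
  dvd_trans (pow_dvd_pow 2 h) hd

lemma F_imp_e {m : ℕ} {n : ℤ} (hm : m % 2 = 0) (h0 : m ≠ 0)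
    (hF : (2:ℤ) ^ (Nat.log 2 m) ∣ n) : (2:ℤ) ^ (padicValNat 2 m) ∣ n :=
  intpow2_dvd_trans (v2_le_log h0) hF

lemma edge_F_eq {m : ℕ} {n : ℤ} (hm : m % 2 = 0) (h0 : m ≠ 0)
    (hd : (2:ℤ) ^ (padicValNat 2 m) ∣ n) :
    ((2:ℤ) ^ (Nat.log 2 (m - 1)) ∣ n) ↔ ((2:ℤ) ^ (Nat.log 2 m) ∣ n) := by
  set w := padicValNat 2 m with hwdef
  have hw : 1 ≤ w := one_le_padicValNat_of_dvd (by omega) (by omega)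
  by_cases hp : m = 2 ^ w
  · have hlm : Nat.log 2 m = w := by rw [hp]; exact Nat.log_pow (b := 2) (by norm_num) w
    have hlm1 : Nat.log 2 (m - 1) = w - 1 := by rw [hp]; exact log_two_pow_sub_one hw
    rw [hlm, hlm1]
    exact iff_of_true (intpow2_dvd_trans (by omega) hd) hd
  · have h1 : 2 ^ Nat.log 2 m ≤ m := Nat.pow_log_le_self 2 h0
    have h2 : m < 2 ^ (Nat.log 2 m + 1) := Nat.lt_pow_succ_log_self (by norm_num) m
    have hne : 2 ^ Nat.log 2 m ≠ m := by
      intro h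
      apply hp
      have hpp := padicValNat.prime_pow (p := 2) (Nat.log 2 m)
      rw [h] at hpp
      rw [hwdef, hpp]
      exact h.symm
    have : Nat.log 2 (m - 1) = Nat.log 2 m :=
      Nat.log_eq_of_pow_le_of_lt_pow (by omega) (by omega)
    rw [this]

lemma inv7_arith {m : ℕ} {n : ℤ} (hm : m % 2 = 1)
    (hF : (2:ℤ) ^ (Nat.log 2 m) ∣ n) (hne : ¬ (2:ℤ) ^ (padicValNat 2 (m + 1)) ∣ n) :
    m + 1 = 2 ^ (padicValNat 2 (m + 1)) := by
  set w := padicValNat 2 (m + 1) with hwdef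
  set L := Nat.log 2 m with hLdef
  have hwL : L < w := by
    by_contra hc
    exact hne (intpow2_dvd_trans (by omega) hF)
  have hdvd : 2 ^ w ∣ m + 1 := pow_padicValNat_dvd
  have h1 : 2 ^ w ≤ m + 1 := Nat.le_of_dvd (by omega) hdvd
  have h2 : m < 2 ^ (L + 1) := Nat.lt_pow_succ_log_self (by norm_num) m
  have h3 : 2 ^ (L + 1) ≤ 2 ^ w := Nat.pow_le_pow_right (by norm_num) (by omega)
  omega

lemma inv8_arith {m : ℕ} {n : ℤ} (h0 : m ≠ 0)
    (hh : m + 1 = 2 ^ (padicValNat 2 (m + 1)))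
    (he : (2:ℤ) ^ (padicValNat 2 (m + 1)) ∣ n) : (2:ℤ) ^ (Nat.log 2 m) ∣ n := by
  set w := padicValNat 2 (m + 1) with hwdef
  have hw : 1 ≤ w := by
    rcases Nat.eq_zero_or_pos w with h | h
    · rw [h] at hh; omega
    · exact h
  have hL : Nat.log 2 m = w - 1 := by
    have : m = 2 ^ w - 1 := by omega
    rw [this]
    exact log_two_pow_sub_one hw
  rw [hL]
  exact intpow2_dvd_trans (by omega) he

lemma v2_even {m : ℕ} (hm : m % 2 = 0) (h0 : m ≠ 0) : 1 ≤ padicValNat 2 m :=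
  one_le_padicValNat_of_dvd (by omega) (by omega)

lemma v2_odd_succ {m : ℕ} (hm : m % 2 = 1) : 1 ≤ padicValNat 2 (m + 1) :=
  one_le_padicValNat_of_dvd (by omega) (by omega)

lemma v2_odd_eq_zero {m : ℕ} (hm : m % 2 = 1) : padicValNat 2 m = 0 :=
  padicValNat.eq_zero_of_not_dvd (by omega)

/-! ### `yNbr` case analysis -/

lemma yNbr_zero (n : ℤ) : yNbr (0, n) = (0, n) := by simp [yNbr]

lemma yNbr_edge {m : ℕ} {n : ℤ} (he : edgeP (m, n)) :
    yNbr (m, n) = (if m % 2 = 1 then m + 1 else m - 1, n) := by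
  obtain ⟨h0, hd⟩ := he
  unfold yNbr
  rw [if_neg h0]
  by_cases hm : m % 2 = 1
  · rw [if_pos hm, if_pos hm]
    rw [if_pos]
    simpa [wexp, hm] using hd
  · rw [if_neg hm, if_neg hm]
    rw [if_pos]
    simpa [wexp, hm] using hd

lemma yNbr_loop {m : ℕ} {n : ℤ} (he : ¬ edgeP (m, n)) : yNbr (m, n) = (m, n) := by
  unfold yNbr
  by_cases h0 : m = 0
  · rw [if_pos h0]
  · rw [if_neg h0]
    by_cases hm : m % 2 = 1
    · rw [if_pos hm, if_neg]
      intro hd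
      exact he ⟨h0, by simpa [wexp, hm] using hd⟩
    · rw [if_neg hm, if_neg]
      intro hd
      exact he ⟨h0, by simpa [wexp, hm] using hd⟩

/-- The `y`-partner of a vertex with an edge also has an edge. -/
lemma edgeP_partner {m : ℕ} {n : ℤ} (he : edgeP (m, n)) :
    edgeP (if m % 2 = 1 then m + 1 else m - 1, n) := by
  obtain ⟨h0, hd⟩ := he
  by_cases hm : m % 2 = 1
  · rw [if_pos hm]
    refine ⟨by omega, ?_⟩
    have : wexp (m + 1) = wexp m := by
      unfold wexp
      rw [if_neg (by omega : ¬ (m+1) % 2 = 1), if_pos hm]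
    rw [this]; exact hd
  · rw [if_neg hm]
    refine ⟨by omega, ?_⟩
    rw [wexp_pair (by omega) h0]; exact hd

lemma e_to_dvd2 {m : ℕ} {n : ℤ} (he : edgeP (m, n)) : (2:ℤ) ∣ n := by
  obtain ⟨h0, hd⟩ := he
  have h1 : 1 ≤ wexp m := wexp_pos h0
  exact dvd_trans (by simpa using pow_dvd_pow (2:ℤ) h1) hd

/-! ### The intended tiling satisfies the invariants and the rules -/

lemma CInv_gT (p : ℕ × ℤ) : CInv (gT p) := by
  obtain ⟨m, n⟩ := p
  simp only [CInv, gT, decide_eq_true_eq, decide_eq_false_iff_not]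
  refine ⟨?_, ?_, ?_, ?_, ?_, ?_, ?_, ?_⟩
  · intro h0
    refine ⟨by omega, ?_, ?_, by simp [h0]⟩
    · rintro ⟨h, -⟩; exact h h0
    · subst h0; simpa using (one_dvd n)
  · intro hz; omega
  · intro hz ho
    exact ⟨ho, by rw [hz]; exact dvd_zero _⟩
  · intro he
    have := e_to_dvd2 he
    omega
  · intro ha ho hF
    exact ⟨ho, by
      unfold wexp
      rw [if_neg (by omega : ¬ m % 2 = 1)]
      exact F_imp_e (by omega) ho hF⟩
  · rintro ⟨h0, hpow⟩
    by_contra hc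
    have : padicValNat 2 (m + 1) = 0 := v2_odd_eq_zero (by omega)
    rw [this] at hpow
    omega
  · intro ha hF he
    have h0 : m ≠ 0 := by omega
    refine ⟨h0, ?_⟩
    apply inv7_arith ha hF
    intro hd
    exact he ⟨h0, by unfold wexp; rw [if_pos ha]; exact hd⟩
  · rintro ha he hF ⟨h0, hpow⟩
    apply hF
    obtain ⟨-, hd⟩ := he
    unfold wexp at hd
    rw [if_pos ha] at hd
    exact inv8_arith h0 hpow hd

lemma Rz_gT (m : ℕ) (n : ℤ) : Rz (gT (m, n)) (gT (m, n + 1)) := by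
  refine ⟨CInv_gT _, CInv_gT _, rfl, rfl, rfl, ?_, ?_, ?_, ?_, ?_⟩
  · show decide ((n+1) % 2 = 1) = !decide (n % 2 = 1)
    by_cases h : n % 2 = 1 <;> simp [h] <;> omega
  · intro h
    simp only [gT, decide_eq_true_eq] at h
    constructor <;> simp only [gT, decide_eq_false_iff_not] <;> omega
  · intro h1 h2
    simp only [gT, decide_eq_false_iff_not] at h1 h2
    constructor <;> simp only [gT, decide_eq_false_iff_not] <;> omega
  · intro h
    simp only [gT, decide_eq_true_eq] at h
    constructor <;> [skip; skip]
    · simp only [gT, decide_eq_true_eq]; omega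
    · simp only [gT, decide_eq_true_eq]; omega
  · intro h
    simp only [gT, decide_eq_true_eq] at h
    simp only [gT, decide_eq_true_eq]; omega

lemma Rx_gT (p : ℕ × ℤ) : Rx (gT p) (gT (xNbr p)) := by
  obtain ⟨m, n⟩ := p
  by_cases hm : m % 2 = 0
  · have hx : xNbr (m, n) = (m + 1, n) := by simp [xNbr, hm]
    rw [hx]
    refine ⟨CInv_gT _, CInv_gT _, ?_, rfl, rfl, rfl, ?_⟩
    · show decide ((m+1) % 2 = 1) = !decide (m % 2 = 1)
      simp [hm]; omega
    · show decide ((2:ℤ) ^ (Nat.log 2 (m+1)) ∣ n) = decide ((2:ℤ) ^ (Nat.log 2 m) ∣ n)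
      rw [log_pair hm]
  · have hx : xNbr (m, n) = (m - 1, n) := by simp [xNbr, hm]
    rw [hx]
    refine ⟨CInv_gT _, CInv_gT _, ?_, rfl, rfl, rfl, ?_⟩
    · show decide ((m-1) % 2 = 1) = !decide (m % 2 = 1)
      have h1 : ¬ (m - 1) % 2 = 1 := by omega
      have h2 : m % 2 = 1 := by omega
      simp [h1, h2]
    · show decide ((2:ℤ) ^ (Nat.log 2 (m-1)) ∣ n) = decide ((2:ℤ) ^ (Nat.log 2 m) ∣ n)
      have h1 := log_pair (m := m - 1) (by omega)
      rw [(by omega : m - 1 + 1 = m)] at h1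
      rw [h1]

lemma Ry_gT (p : ℕ × ℤ) : Ry (gT p) (gT (yNbr p)) := by
  obtain ⟨m, n⟩ := p
  by_cases he : edgeP (m, n)
  · rw [yNbr_edge he]
    refine ⟨CInv_gT _, CInv_gT _, Or.inr ?_⟩
    have hpart := edgeP_partner he
    by_cases hm : m % 2 = 1
    · rw [if_pos hm] at hpart ⊢
      refine ⟨by simp [gT, he], by simp [gT, hpart], ?_, rfl, rfl, rfl, ?_, ?_, ?_⟩
      · show decide ((m+1) % 2 = 1) = !decide (m % 2 = 1)
        simp [hm]; omega
      · show decide ((2:ℤ) ^ (Nat.log 2 (m+1)) ∣ n) = decide ((2:ℤ) ^ (Nat.log 2 m) ∣ n)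
        apply decide_eq_decide.mpr
        have hd : (2:ℤ) ^ (padicValNat 2 (m + 1)) ∣ n := by
          have := he.2; unfold wexp at this; rwa [if_pos hm] at this
        have hiff := edge_F_eq (m := m + 1) (n := n) (by omega) (by omega) hd
        rw [(by omega : m + 1 - 1 = m)] at hiff
        exact hiff.symm
      · simp [gT]; omega
      · simp [gT]
    · rw [if_neg hm] at hpart ⊢
      have h0 : m ≠ 0 := he.1
      refine ⟨by simp [gT, he], by simp [gT, hpart], ?_, rfl, rfl, rfl, ?_, ?_, ?_⟩
      · show decide ((m-1) % 2 = 1) = !decide (m % 2 = 1)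
        have h1 : (m - 1) % 2 = 1 := by omega
        simp [h1, hm]
      · show decide ((2:ℤ) ^ (Nat.log 2 (m-1)) ∣ n) = decide ((2:ℤ) ^ (Nat.log 2 m) ∣ n)
        apply decide_eq_decide.mpr
        have hd : (2:ℤ) ^ (padicValNat 2 m) ∣ n := by
          have := he.2; unfold wexp at this; rwa [if_neg hm] at this
        exact edge_F_eq (by omega) h0 hd
      · simp [gT, h0]
      · simp [gT]; omega
  · rw [yNbr_loop he]
    exact ⟨CInv_gT _, CInv_gT _, Or.inl ⟨rfl, by simp [gT, he]⟩⟩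

theorem HValid_gT : HValid Θh gT := by
  intro p
  refine ⟨?_, Rx_gT p, Ry_gT p⟩
  obtain ⟨m, n⟩ := p
  exact Rz_gT m n

/-! ### Uniqueness -/

lemma gT_col0 (n : ℤ) :
    gT (0, n) = ⟨false, true, decide (n % 2 = 1), decide (n = 0), decide (n < 0),
      false, true, false⟩ := by
  simp only [gT]
  ext <;> simp [edgeP]

section Uniq

variable {τ : ℕ × ℤ → Col} (hv : HValid Θh τ)

include hv

lemma hvz (m : ℕ) (n : ℤ) : Rz (τ (m, n)) (τ (m, n + 1)) := (hv (m, n)).1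

lemma hvx (p : ℕ × ℤ) : Rx (τ p) (τ (xNbr p)) := (hv p).2.1

lemma hvy (p : ℕ × ℤ) : Ry (τ p) (τ (yNbr p)) := (hv p).2.2

lemma col0_up (m : ℕ) (n : ℤ) (hn : 0 ≤ n) (hcur : τ (m, n) = gT (0, n)) :
    τ (m, n + 1) = gT (0, n + 1) := by
  have hz := hvz hv m n
  rw [hcur] at hz
  obtain ⟨-, hId, haa, hoo, hhh, hrr, hz0, hzp, -, -⟩ := hz
  rw [gT_col0] at haa hoo hhh hrr hz0 hzp
  simp only at haa hoo hhh hrr hz0 hzp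
  have ho : (τ (m, n + 1)).o = true := by rw [hoo]
  obtain ⟨ha, he, hF, hh⟩ := hId.1 ho
  have hzz : (τ (m, n+1)).z0 = false ∧ (τ (m, n+1)).zn = false := by
    by_cases h0 : n = 0
    · exact hz0 (by simp [h0])
    · have h1 : ¬ n < 0 := by omega
      exact hzp (by simp [h0]) (by simp [h1])
  rw [gT_col0]
  ext
  · rw [ha]
  · rw [ho]
  · rw [hrr]
    show (!decide (n % 2 = 1)) = decide ((n + 1) % 2 = 1)
    by_cases h : n % 2 = 1 <;> simp [h] <;> omega
  · rw [hzz.1]; simp; omega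
  · rw [hzz.2]; simp; omega
  · rw [he]
  · rw [hF]
  · rw [hh]

lemma col0_down (m : ℕ) (n : ℤ) (hn : n ≤ 0) (hcur : τ (m, n) = gT (0, n)) :
    τ (m, n - 1) = gT (0, n - 1) := by
  have hz := hvz hv m (n - 1)
  rw [(by ring : n - 1 + 1 = n), hcur] at hz
  obtain ⟨hIc, -, haa, hoo, hhh, hrr, hz0, -, hdz0, hdzn⟩ := hz
  rw [gT_col0] at haa hoo hhh hrr hz0 hdz0 hdzn
  simp only at haa hoo hhh hrr hz0 hdz0 hdzn
  have ho : (τ (m, n - 1)).o = true := hoo.symm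
  obtain ⟨ha, he, hF, hh⟩ := hIc.1 ho
  have hczn : (τ (m, n - 1)).zn = true := by
    by_cases h0 : n = 0
    · exact (hdz0 (by simp [h0])).1
    · have h1 : n < 0 := by omega
      exact hdzn (by simp [h1])
  have hcz0 : (τ (m, n - 1)).z0 = false := by
    cases hcz : (τ (m, n - 1)).z0
    · rfl
    · have := hz0 hcz
      by_cases h0 : n = 0
      · simp [h0] at this
      · have h1 : n < 0 := by omega
        simp [h1] at this
  rw [gT_col0]
  ext
  · rw [ha]
  · rw [ho]
  · have : (τ (m, n - 1)).r = !(decide (n % 2 = 1)) := by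
      rw [hrr]; cases hb : (τ (m, n - 1)).r <;> simp
    rw [this]
    show (!decide (n % 2 = 1)) = decide ((n - 1) % 2 = 1)
    by_cases h : n % 2 = 1 <;> simp [h] <;> omega
  · rw [hcz0]; simp; omega
  · rw [hczn]; simp; omega
  · rw [he]
  · rw [hF]
  · rw [hh]

lemma col0_all (hseed : τ (0, 0) = gT (0, 0)) : ∀ n : ℤ, τ (0, n) = gT (0, n) := by
  have hup : ∀ k : ℕ, τ (0, (k : ℤ)) = gT (0, (k : ℤ)) := by
    intro k
    induction k with
    | zero => exact hseed
    | succ k ih =>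
        have := col0_up hv 0 (k : ℤ) (by omega) ih
        simpa [Int.natCast_succ] using this
  have hdown : ∀ k : ℕ, τ (0, -(k : ℤ)) = gT (0, -(k : ℤ)) := by
    intro k
    induction k with
    | zero => simpa using hseed
    | succ k ih =>
        have := col0_down hv 0 (-(k : ℤ)) (by omega) ih
        have heq : -(k : ℤ) - 1 = -((k + 1 : ℕ) : ℤ) := by push_cast; ring
        rwa [heq] at this
  intro n
  rcases Int.eq_nat_or_neg n with ⟨k, rfl | rfl⟩
  · exact hup k
  · exact hdown k

lemma cinv (p : ℕ × ℤ) : CInv (τ p) := (hv p).1.1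

/-- Row-0 partial specification. -/
lemma row0 (hseed : τ (0, 0) = gT (0, 0)) :
    ∀ m : ℕ, (τ (m, 0)).a = decide (m % 2 = 1) ∧ (τ (m, 0)).o = decide (m = 0) ∧
      (τ (m, 0)).r = false ∧ (τ (m, 0)).z0 = true ∧ (τ (m, 0)).zn = false ∧
      (τ (m, 0)).e = decide (m ≠ 0) ∧ (τ (m, 0)).F = true := by
  intro m
  induction m using Nat.strong_induction_on with
  | _ m IH =>
    match m with
    | 0 =>
        rw [hseed, gT_col0]
        simp
    | Nat.succ m =>
        obtain ⟨da, do_, dr, dz0, dzn, de, dF⟩ := IH m (by omega)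
        by_cases hm : (m + 1) % 2 = 1
        · -- odd column: use the x-edge to column m
          have hx := hvx hv (m + 1, 0)
          have hxn : xNbr ((m : ℕ) + 1, (0 : ℤ)) = (m, 0) := by
            simp only [xNbr]
            rw [if_neg (by omega : ¬ (m + 1) % 2 = 0)]
            simp
          rw [hxn] at hx
          obtain ⟨hIc, -, hba, hbr, hbz0, hbzn, hbF⟩ := hx
          have hca : (τ (m + 1, 0)).a = true := by
            have hma : (m : ℕ) % 2 = 0 := by omega
            rw [da] at hba
            simp [hma] at hba
            cases hc : (τ (m + 1, 0)).a
            · rw [hc] at hba; simp at hba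
            · rfl
          have hco : (τ (m + 1, 0)).o = false := by
            cases hc : (τ (m + 1, 0)).o
            · rfl
            · have := (hIc.1 hc).1
              rw [this] at hca; exact absurd hca (by simp)
          have hcz0 : (τ (m + 1, 0)).z0 = true := by rw [← hbz0, dz0]
          have hce : (τ (m + 1, 0)).e = true := hIc.2.2.1 hcz0 hco
          refine ⟨hca.trans (by simp [hm]), hco.trans (by simp), ?_, hcz0, ?_, ?_, ?_⟩
          · rw [← hbr, dr]
          · rw [← hbzn, dzn]
          · rw [hce]; simp
          · rw [← hbF, dF]
        · -- even column ≥ 2 : use the y-edge to column m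
          have hedge : edgeP (m + 1, 0) := ⟨by omega, dvd_zero _⟩
          have hy := hvy hv (m + 1, 0)
          rw [yNbr_edge hedge, if_neg hm, (by omega : m + 1 - 1 = m)] at hy
          obtain ⟨hIc, -, hcase⟩ := hy
          rcases hcase with ⟨heq, hce⟩ | ⟨hce, -, hba, hbr, hbz0, hbzn, hbF, hco, -⟩
          · rw [heq, de] at hce
            simp only [decide_eq_false_iff_not] at hce
            exact absurd (by omega : (m:ℕ) ≠ 0) (by simpa using hce)
          · have hca : (τ (m + 1, 0)).a = false := by
              rw [da] at hba
              have hmo : (m : ℕ) % 2 = 1 := by omega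
              simp [hmo] at hba
              cases hc : (τ (m + 1, 0)).a
              · rfl
              · rw [hc] at hba; simp at hba
            have hmp : ¬ (m + 1) % 2 = 1 := hm
            refine ⟨hca.trans (by simp [hmp]), ?_, ?_, ?_, ?_, ?_, ?_⟩
            · rw [hco]; simp
            · rw [← hbr, dr]
            · rw [← hbz0, dz0]
            · rw [← hbzn, dzn]
            · rw [hce]; simp
            · rw [← hbF, dF]

/-- Static components are correct everywhere. -/
lemma statics (hseed : τ (0, 0) = gT (0, 0)) :
    ∀ (m : ℕ) (n : ℤ), (τ (m, n)).a = decide (m % 2 = 1) ∧ (τ (m, n)).o = decide (m = 0) ∧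
      (τ (m, n)).r = decide (n % 2 = 1) ∧ (τ (m, n)).z0 = decide (n = 0) ∧
      (τ (m, n)).zn = decide (n < 0) ∧ (τ (m, n)).h = (τ (m, 0)).h := by
  intro m
  obtain ⟨ra, ro, rr, rz0, rzn, -, -⟩ := row0 hv hseed m
  have base : (τ (m, (0:ℤ))).a = decide (m % 2 = 1) ∧ (τ (m, (0:ℤ))).o = decide (m = 0) ∧
      (τ (m, (0:ℤ))).r = decide ((0:ℤ) % 2 = 1) ∧ (τ (m, (0:ℤ))).z0 = decide ((0:ℤ) = 0) ∧
      (τ (m, (0:ℤ))).zn = decide ((0:ℤ) < 0) ∧ (τ (m, (0:ℤ))).h = (τ (m, 0)).h := by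
    refine ⟨ra, ro, ?_, ?_, ?_, rfl⟩ <;> simp [rr, rz0, rzn]
  have hup : ∀ (n : ℤ), 0 ≤ n →
      ((τ (m, n)).a = decide (m % 2 = 1) ∧ (τ (m, n)).o = decide (m = 0) ∧
      (τ (m, n)).r = decide (n % 2 = 1) ∧ (τ (m, n)).z0 = decide (n = 0) ∧
      (τ (m, n)).zn = decide (n < 0) ∧ (τ (m, n)).h = (τ (m, 0)).h) →
      ((τ (m, n+1)).a = decide (m % 2 = 1) ∧ (τ (m, n+1)).o = decide (m = 0) ∧
      (τ (m, n+1)).r = decide ((n+1) % 2 = 1) ∧ (τ (m, n+1)).z0 = decide (n+1 = 0) ∧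
      (τ (m, n+1)).zn = decide (n+1 < 0) ∧ (τ (m, n+1)).h = (τ (m, 0)).h) := by
    intro n hn ⟨ca, co, cr, cz0, czn, ch⟩
    obtain ⟨-, -, haa, hoo, hhh, hrr, hz0, hzp, -, -⟩ := hvz hv m n
    have hzz : (τ (m, n+1)).z0 = false ∧ (τ (m, n+1)).zn = false := by
      by_cases h0 : n = 0
      · exact hz0 (by rw [cz0]; simp [h0])
      · refine hzp (by rw [cz0]; simp [h0]) (by rw [czn]; simp; omega)
    refine ⟨haa.trans ca, hoo.trans co, ?_, ?_, ?_, hhh.trans ch⟩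
    · rw [hrr, cr]
      by_cases h : n % 2 = 1 <;> simp [h] <;> omega
    · rw [hzz.1]; simp; omega
    · rw [hzz.2]; simp; omega
  have hdown : ∀ (n : ℤ), n ≤ 0 →
      ((τ (m, n)).a = decide (m % 2 = 1) ∧ (τ (m, n)).o = decide (m = 0) ∧
      (τ (m, n)).r = decide (n % 2 = 1) ∧ (τ (m, n)).z0 = decide (n = 0) ∧
      (τ (m, n)).zn = decide (n < 0) ∧ (τ (m, n)).h = (τ (m, 0)).h) →
      ((τ (m, n-1)).a = decide (m % 2 = 1) ∧ (τ (m, n-1)).o = decide (m = 0) ∧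
      (τ (m, n-1)).r = decide ((n-1) % 2 = 1) ∧ (τ (m, n-1)).z0 = decide (n-1 = 0) ∧
      (τ (m, n-1)).zn = decide (n-1 < 0) ∧ (τ (m, n-1)).h = (τ (m, 0)).h) := by
    intro n hn ⟨ca, co, cr, cz0, czn, ch⟩
    have hz := hvz hv m (n - 1)
    rw [(by ring : n - 1 + 1 = n)] at hz
    obtain ⟨-, -, haa, hoo, hhh, hrr, hz0, -, hdz0, hdzn⟩ := hz
    have hczn : (τ (m, n - 1)).zn = true := by
      by_cases h0 : n = 0
      · exact (hdz0 (by rw [cz0]; simp [h0])).1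
      · exact hdzn (by rw [czn]; simp; omega)
    have hcz0 : (τ (m, n - 1)).z0 = false := by
      cases hc : (τ (m, n - 1)).z0
      · rfl
      · obtain ⟨h1, h2⟩ := hz0 hc
        rw [cz0] at h1
        rw [czn] at h2
        simp at h1 h2
        omega
    refine ⟨ca ▸ haa.symm, co ▸ hoo.symm, ?_, ?_, ?_, ch ▸ hhh.symm⟩
    · have : (τ (m, n-1)).r = !(τ (m, n)).r := by
        rw [hrr]; cases hb : (τ (m, n-1)).r <;> simp
      rw [this, cr]
      by_cases h : n % 2 = 1 <;> simp [h] <;> omega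
    · rw [hcz0]; simp; omega
    · rw [hczn]; simp; omega
  intro n
  rcases Int.eq_nat_or_neg n with ⟨k, rfl | rfl⟩
  · induction k with
    | zero => simpa using base
    | succ k ih =>
        have := hup (k : ℤ) (by omega) ih
        simpa [Int.natCast_succ] using this
  · induction k with
    | zero => simpa using base
    | succ k ih =>
        have := hdown (-(k : ℤ)) (by omega) ih
        have heq : -(k : ℤ) - 1 = -((k + 1 : ℕ) : ℤ) := by push_cast; ring
        rwa [heq] at this

/-- The `e` and `F` components are correct everywhere. -/
lemma eF_correct (hseed : τ (0, 0) = gT (0, 0)) :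
    ∀ (m : ℕ) (n : ℤ), (τ (m, n)).e = (gT (m, n)).e ∧ (τ (m, n)).F = (gT (m, n)).F := by
  intro m
  induction m using Nat.strong_induction_on with
  | _ m IH =>
    match m with
    | 0 =>
        intro n
        rw [col0_all hv hseed n]
        exact ⟨rfl, rfl⟩
    | Nat.succ m =>
        intro n
        obtain ⟨iha, ihF⟩ := IH m (by omega) n
        obtain ⟨sa, so, -, -, -, -⟩ := statics hv hseed (m + 1) n
        obtain ⟨sa', -, -, -, -, -⟩ := statics hv hseed m n
        by_cases hm : (m + 1) % 2 = 1
        · -- odd column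
          constructor
          · by_cases he : edgeP (m + 1, n)
            · have hy := hvy hv (m + 1, n)
              rw [yNbr_edge he, if_pos hm] at hy
              obtain ⟨-, -, hcase⟩ := hy
              rcases hcase with ⟨heq, -⟩ | ⟨hce, -⟩
              · exfalso
                have h1 := congrArg Col.a heq
                obtain ⟨ta, -, -, -, -, -⟩ := statics hv hseed (m + 1 + 1) n
                rw [sa, ta] at h1
                have e1 : (m + 1) % 2 = 1 := hm
                have e2 : ¬ (m + 1 + 1) % 2 = 1 := by omega
                simp [e1, e2] at h1
              · rw [hce]
                show _ = decide (edgeP (m+1, n))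
                simp [he]
            · have hy := hvy hv (m + 1, n)
              rw [yNbr_loop he] at hy
              obtain ⟨-, -, hcase⟩ := hy
              rcases hcase with ⟨-, hce⟩ | ⟨-, -, hba, -⟩
              · rw [hce]
                show _ = decide (edgeP (m+1, n))
                simp [he]
              · exfalso
                cases hb : (τ (m+1, n)).a <;> rw [hb] at hba <;> simp at hba
          · have hx := hvx hv (m + 1, n)
            have hxn : xNbr ((m : ℕ) + 1, n) = (m, n) := by
              simp only [xNbr]
              rw [if_neg (by omega : ¬ (m + 1) % 2 = 0)]
              simp
            rw [hxn] at hx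
            obtain ⟨-, -, -, -, -, -, hbF⟩ := hx
            rw [← hbF, ihF]
            show (gT (m, n)).F = (gT (m+1, n)).F
            show decide ((2:ℤ) ^ (Nat.log 2 m) ∣ n) = decide ((2:ℤ) ^ (Nat.log 2 (m+1)) ∣ n)
            rw [log_pair (by omega : m % 2 = 0)]
        · -- even column (m+1 ≥ 2, m odd)
          have hmo : m % 2 = 1 := by omega
          by_cases he : edgeP (m + 1, n)
          · have hy := hvy hv (m + 1, n)
            rw [yNbr_edge he, if_neg hm, (by omega : m + 1 - 1 = m)] at hy
            obtain ⟨-, -, hcase⟩ := hy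
            rcases hcase with ⟨heq, -⟩ | ⟨hce, -, -, -, -, -, hbF, -, -⟩
            · exfalso
              have h1 := congrArg Col.a heq
              rw [sa, sa'] at h1
              simp [hm, hmo] at h1
            · constructor
              · rw [hce]
                show _ = decide (edgeP (m+1, n))
                simp [he]
              · rw [← hbF, ihF]
                show (gT (m, n)).F = (gT (m+1, n)).F
                show decide ((2:ℤ) ^ (Nat.log 2 m) ∣ n) = decide ((2:ℤ) ^ (Nat.log 2 (m+1)) ∣ n)
                apply decide_eq_decide.mpr
                have hd : (2:ℤ) ^ (padicValNat 2 (m + 1)) ∣ n := by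
                  have := he.2; unfold wexp at this; rwa [if_neg hm] at this
                have hiff := edge_F_eq (m := m + 1) (n := n) (by omega) (by omega) hd
                rwa [(by omega : m + 1 - 1 = m)] at hiff
          · have hy := hvy hv (m + 1, n)
            rw [yNbr_loop he] at hy
            obtain ⟨hIc, -, hcase⟩ := hy
            have hce : (τ (m+1, n)).e = false := by
              rcases hcase with ⟨-, hce⟩ | ⟨-, -, hba, -⟩
              · exact hce
              · exfalso
                cases hb : (τ (m+1, n)).a <;> rw [hb] at hba <;> simp at hba
            constructor
            · rw [hce]
              show _ = decide (edgeP (m+1, n))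
              simp [he]
            · have hcF : (τ (m+1, n)).F = false := by
                cases hb : (τ (m+1, n)).F
                · rfl
                · exfalso
                  have := hIc.2.2.2.2.1 (by rw [sa]; simp [hm]) (by rw [so]; simp) hb
                  rw [hce] at this
                  exact absurd this (by simp)
              rw [hcF]
              show _ = decide ((2:ℤ) ^ (Nat.log 2 (m+1)) ∣ n)
              have : ¬ ((2:ℤ) ^ (Nat.log 2 (m+1)) ∣ n) := by
                intro hF
                apply he
                refine ⟨by omega, ?_⟩
                unfold wexp
                rw [if_neg hm]
                exact F_imp_e (by omega) (by omega) hF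
              simp [this]

omit hv in
lemma int_pow2_not_dvd {a b : ℕ} (h : b < a) : ¬ ((2:ℤ) ^ a ∣ (2:ℤ) ^ b) := by
  intro hd
  have h1 : (0:ℤ) < 2 ^ b := by positivity
  have h2 := Int.le_of_dvd h1 hd
  have h3 : (2:ℤ) ^ b < 2 ^ a := by
    apply pow_lt_pow_right₀ (by norm_num) h
  omega

omit hv in
lemma log_ge_of_not_pow {m : ℕ} (hm : m % 2 = 1)
    (hnp : m + 1 ≠ 2 ^ (padicValNat 2 (m + 1))) :
    padicValNat 2 (m + 1) + 1 ≤ Nat.log 2 m := by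
  set w := padicValNat 2 (m + 1) with hwdef
  obtain ⟨q, hq⟩ := (pow_padicValNat_dvd : 2 ^ w ∣ m + 1)
  have hq1 : q ≠ 1 := by intro h; rw [h, mul_one] at hq; exact hnp hq
  have hq0 : q ≠ 0 := by intro h; rw [h, mul_zero] at hq; omega
  have hqodd : ¬ 2 ∣ q := by
    intro ⟨t, ht⟩
    have hdvd : 2 ^ (w + 1) ∣ m + 1 := by
      refine ⟨t, ?_⟩
      rw [hq, ht]
      ring
    have := (Nat.Prime.pow_dvd_iff_le_factorization Nat.prime_two (by omega)).mp hdvd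
    rw [Nat.factorization_def _ Nat.prime_two] at this
    omega
  have hq3 : 3 ≤ q := by omega
  have hpow : 1 ≤ 2 ^ w := Nat.one_le_two_pow
  have hm2 : 2 ^ (w + 1) ≤ m := by
    have : 2 ^ (w + 1) = 2 * 2 ^ w := by rw [pow_succ]; ring
    nlinarith [hq]
  rw [Nat.le_log_iff_pow_le (by norm_num) (by omega : m ≠ 0)]
  exact hm2

/-- The `h` component is correct everywhere. -/
lemma h_correct (hseed : τ (0, 0) = gT (0, 0)) :
    ∀ (m : ℕ) (n : ℤ), (τ (m, n)).h = (gT (m, n)).h := by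
  intro m n
  obtain ⟨sa, -, -, -, -, sh⟩ := statics hv hseed m n
  by_cases hm : m % 2 = 1
  · -- odd column: pin the value of h at a suitable row
    rcases Nat.eq_zero_or_pos m with h0 | h0
    · omega
    set w := padicValNat 2 (m + 1) with hwdef
    have hw : 1 ≤ w := v2_odd_succ hm
    by_cases hpow : m + 1 = 2 ^ w
    · -- horoball column
      set nn : ℤ := 2 ^ (w - 1) with hnn
      obtain ⟨se, sF⟩ := eF_correct hv hseed m nn
      obtain ⟨-, -, -, -, -, sh'⟩ := statics hv hseed m nn
      have hIc := cinv hv (m, nn)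
      have hae : (τ (m, nn)).a = true := by
        obtain ⟨ta, -⟩ := statics hv hseed m nn
        rw [ta]; simp [hm]
      have hee : (τ (m, nn)).e = false := by
        rw [se]
        show decide (edgeP (m, nn)) = false
        simp only [decide_eq_false_iff_not]
        rintro ⟨-, hd⟩
        unfold wexp at hd
        rw [if_pos hm, ← hwdef] at hd
        exact int_pow2_not_dvd (by omega) hd
      have hFF : (τ (m, nn)).F = true := by
        rw [sF]
        show decide ((2:ℤ) ^ (Nat.log 2 m) ∣ nn) = true
        have hlm : Nat.log 2 m = w - 1 := by
          have : m = 2 ^ w - 1 := by omega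
          rw [this]; exact log_two_pow_sub_one hw
        rw [hlm, hnn]
        simp
      have hhh : (τ (m, nn)).h = true := hIc.2.2.2.2.2.2.1 hae hFF hee
      rw [sh, ← sh', hhh]
      symm
      simp only [gT, decide_eq_true_eq]
      exact ⟨by omega, by rw [← hwdef]; exact hpow⟩
    · -- non-horoball odd column
      set nn : ℤ := 2 ^ w with hnn
      obtain ⟨se, sF⟩ := eF_correct hv hseed m nn
      obtain ⟨-, -, -, -, -, sh'⟩ := statics hv hseed m nn
      have hIc := cinv hv (m, nn)
      have hae : (τ (m, nn)).a = true := by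
        obtain ⟨ta, -⟩ := statics hv hseed m nn
        rw [ta]; simp [hm]
      have hee : (τ (m, nn)).e = true := by
        rw [se]
        show decide (edgeP (m, nn)) = true
        simp only [decide_eq_true_eq]
        refine ⟨by omega, ?_⟩
        unfold wexp
        rw [if_pos hm, ← hwdef, hnn]
      have hFF : (τ (m, nn)).F = false := by
        rw [sF]
        show decide ((2:ℤ) ^ (Nat.log 2 m) ∣ nn) = false
        simp only [decide_eq_false_iff_not]
        intro hd
        rw [hnn] at hd
        have hlog := log_ge_of_not_pow hm (by rw [← hwdef]; exact hpow)
        rw [← hwdef] at hlog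
        exact int_pow2_not_dvd (by omega) hd
      have hhh : (τ (m, nn)).h = false := hIc.2.2.2.2.2.2.2 hae hee hFF
      rw [sh, ← sh', hhh]
      symm
      simp only [gT, decide_eq_false_iff_not]
      rintro ⟨-, hp⟩
      rw [← hwdef] at hp
      exact hpow hp
  · -- even column
    have hIc := cinv hv (m, n)
    have hca : (τ (m, n)).h = false := by
      cases hb : (τ (m, n)).h
      · rfl
      · exfalso
        have := hIc.2.2.2.2.2.1 hb
        rw [sa] at this
        simp [hm] at this
    rw [hca]
    symm
    simp only [gT, decide_eq_false_iff_not]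
    rintro ⟨h0, hp⟩
    have : padicValNat 2 (m + 1) = 0 := v2_odd_eq_zero (by omega)
    rw [this] at hp
    simp at hp
    omega

/-- Any valid seeded tiling equals `gT`. -/
lemma tau_eq (hseed : τ (0, 0) = gT (0, 0)) : ∀ p : ℕ × ℤ, τ p = gT p := by
  rintro ⟨m, n⟩
  obtain ⟨sa, so, sr, sz0, szn, -⟩ := statics hv hseed m n
  obtain ⟨se, sF⟩ := eF_correct hv hseed m n
  have shh := h_correct hv hseed m n
  ext
  · exact sa
  · exact so
  · exact sr
  · exact sz0
  · exact szn
  · exact se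
  · exact sF
  · exact shh

end Uniq

/-- The marked colours identify exactly the horoball vertices. -/
lemma marks (p : ℕ × ℤ) :
    ((gT p).F = true ∧ (gT p).h = true) ↔
      ∃ (s : ℕ) (k : ℤ), p.1 = 2 ^ (s + 1) - 1 ∧ p.2 = 2 ^ s * k := by
  obtain ⟨m, n⟩ := p
  simp only [gT, decide_eq_true_eq]
  constructor
  · rintro ⟨hF, h0, hpow⟩
    set w := padicValNat 2 (m + 1) with hwdef
    have hw : 1 ≤ w := by
      rcases Nat.eq_zero_or_pos w with h | h
      · rw [h] at hpow; simp at hpow; omega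
      · exact h
    refine ⟨w - 1, ?_⟩
    have hm : m = 2 ^ (w - 1 + 1) - 1 := by
      rw [(by omega : w - 1 + 1 = w)]; omega
    have hlm : Nat.log 2 m = w - 1 := by
      have : m = 2 ^ w - 1 := by omega
      rw [this]; exact log_two_pow_sub_one hw
    rw [hlm] at hF
    obtain ⟨k, hk⟩ := hF
    exact ⟨k, hm, by push_cast [hk]; ring⟩
  · rintro ⟨s, k, hm, hn⟩
    have h1 : 1 ≤ 2 ^ (s + 1) := Nat.one_le_two_pow
    have h2 : 2 ^ (s + 1) = 2 * 2 ^ s := by rw [pow_succ]; ring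
    have h3 : 1 ≤ 2 ^ s := Nat.one_le_two_pow
    have hm1 : m + 1 = 2 ^ (s + 1) := by omega
    have hlm : Nat.log 2 m = s := by
      rw [hm]; exact log_two_pow_sub_one (by omega)
    refine ⟨?_, by omega, ?_⟩
    · rw [hlm, hn]
      exact ⟨k, by push_cast; ring⟩
    · rw [hm1, padicValNat.prime_pow]

/-- There is a tileset `Θ₀` over a finite colour set `B₀` with a seed colour `a₀` and a set
`C ⊆ B₀` of colours such that the H-graph admits a unique valid `Θ₀`-tiling `τ` with
`τ (0,0) = a₀`, and this tiling colours a vertex `(m,n)` inside `C` exactly when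
`(m,n) = (2^(s+1) - 1, 2^s k)` for some `s ≥ 0`, `k ∈ ℤ`, i.e. the colours in `C` mark
exactly the vertex set of the hyperbolic horoball. -/
theorem hgraph_unique_seeded_tiling_marks_horoball :
    ∃ (B₀ : Type) (_ : Fintype B₀) (Θ₀ : Set (B₀ × HLab × B₀)) (a₀ : B₀) (C : Set B₀),
      (∃! τ : ℕ × ℤ → B₀, HValid Θ₀ τ ∧ τ (0, 0) = a₀) ∧
      ∀ τ : ℕ × ℤ → B₀, HValid Θ₀ τ → τ (0, 0) = a₀ →
        ∀ p : ℕ × ℤ,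
          (τ p ∈ C ↔ ∃ (s : ℕ) (k : ℤ), p.1 = 2 ^ (s + 1) - 1 ∧ p.2 = 2 ^ s * k) := by
  refine ⟨Col, inferInstance, Θh, gT (0, 0), {c : Col | c.F = true ∧ c.h = true}, ?_, ?_⟩
  · refine ⟨gT, ⟨HValid_gT, rfl⟩, ?_⟩
    rintro τ ⟨h1, h2⟩
    exact funext (tau_eq h1 h2)
  · intro τ h1 h2 p
    rw [tau_eq h1 h2 p]
    exact marks p
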